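/- Derivative of the KL divergence from a fixed margin to the marginal of an exponential family: with the exponential family G(θ)(x,y) = exp(θ·T(x,y) − ψ(θ)) p₁(x)p₂(y), ψ(θ) = log(∑_{x,y} exp(θ·T(x,y)) p₁(x)p₂(y)), marginal G₁(θ)(x) = ∑_z G(θ)(x,z), a fixed positive density r₁ on Ω₁, and t ↦ θ(t) differentiable at t₀, the function t ↦ KL(r₁ ‖ G₁(θ(t))) is differentiable at t₀ with derivative −∑_j ( ∑_x r₁(x) · ∑_z (T_j(x,z) − E_{G(θ(t₀))}[T_j]) · G(θ(t₀))(x,z)/G₁(θ(t₀))(x) ) · θ'_j(t₀). -/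

import Mathlib

/-- Log-partition function of the exponential family on a product space with
reference density `p₁ ⊗ p₂`. -/
noncomputable def logPartition2 {Ω₁ Ω₂ : Type*} [Fintype Ω₁] [Fintype Ω₂] {d : ℕ}
    (p₁ : Ω₁ → ℝ) (p₂ : Ω₂ → ℝ) (T : Ω₁ × Ω₂ → Fin d → ℝ) (θ : Fin d → ℝ) : ℝ :=
  Real.log (∑ x, ∑ y, Real.exp (∑ j, θ j * T (x, y) j) * (p₁ x * p₂ y))

/-- The exponential family `G(θ)(x,y) = exp(θ·T(x,y) - ψ(θ)) · p₁(x) p₂(y)`. -/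
noncomputable def expFamily2 {Ω₁ Ω₂ : Type*} [Fintype Ω₁] [Fintype Ω₂] {d : ℕ}
    (p₁ : Ω₁ → ℝ) (p₂ : Ω₂ → ℝ) (T : Ω₁ × Ω₂ → Fin d → ℝ) (θ : Fin d → ℝ)
    (x : Ω₁) (y : Ω₂) : ℝ :=
  Real.exp ((∑ j, θ j * T (x, y) j) - logPartition2 p₁ p₂ T θ) * (p₁ x * p₂ y)

private lemma sum_swap_lin {ι : Type*} [Fintype ι] {d : ℕ}
    (f : ι → ℝ) (a : ι → Fin d → ℝ) (θ' : Fin d → ℝ) :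
    ∑ j, (∑ i, a i j * f i) * θ' j = ∑ i, f i * ∑ j, θ' j * a i j := by
  simp only [Finset.sum_mul]
  rw [Finset.sum_comm]
  refine Finset.sum_congr rfl fun i _ => ?_
  rw [Finset.mul_sum]
  exact Finset.sum_congr rfl fun j _ => by ring

private lemma kl_alg {Ω₁ Ω₂ : Type*} [Fintype Ω₁] [Fintype Ω₂] {d : ℕ}
    (e : Ω₁ → Ω₂ → ℝ) (Tv : Ω₁ → Ω₂ → Fin d → ℝ) (r₁ : Ω₁ → ℝ) (θ' : Fin d → ℝ)
    (hS : ∀ x, (∑ z, e x z) ≠ 0) (hZ : (∑ x, ∑ z, e x z) ≠ 0)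
    (hr : ∑ x, r₁ x = 1) :
    -∑ j, (∑ x, r₁ x *
        ∑ z, (Tv x z j - ∑ x', ∑ y', Tv x' y' j * (e x' y' / ∑ x'', ∑ z'', e x'' z''))
            * (e x z / ∑ x'', ∑ z'', e x'' z'') / (∑ z', e x z' / ∑ x'', ∑ z'', e x'' z''))
        * θ' j
    = -(∑ x, r₁ x * ((∑ z, e x z * ∑ j, θ' j * Tv x z j) / ∑ z, e x z))
      + (∑ x, ∑ z, e x z * ∑ j, θ' j * Tv x z j) / (∑ x, ∑ z, e x z) := by
  -- abbreviations
  have hEbar : ∀ j, (∑ x', ∑ y', Tv x' y' j * (e x' y' / ∑ x'', ∑ z'', e x'' z''))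
      = (∑ x', ∑ y', Tv x' y' j * e x' y') / (∑ x'', ∑ z'', e x'' z'') := by
    intro j
    rw [Finset.sum_div]
    refine Finset.sum_congr rfl fun x' _ => ?_
    rw [Finset.sum_div]
    exact Finset.sum_congr rfl fun y' _ => by rw [mul_div_assoc]
  have hdenom : ∀ x, (∑ z', e x z' / ∑ x'', ∑ z'', e x'' z'')
      = (∑ z', e x z') / (∑ x'', ∑ z'', e x'' z'') := by
    intro x; rw [Finset.sum_div]
  -- step 1: simplify the ratio inside
  have hratio : ∀ (x : Ω₁) (z : Ω₂) (A : ℝ),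
      A * (e x z / ∑ x'', ∑ z'', e x'' z'') / ((∑ z', e x z') / (∑ x'', ∑ z'', e x'' z''))
        = A * e x z / (∑ z', e x z') := by
    intro x z A
    rw [mul_div_assoc', div_div_div_cancel_right₀ hZ]
  -- step 2: inner z-sum
  have hinner : ∀ (x : Ω₁) (j : Fin d),
      (∑ z, (Tv x z j - (∑ x', ∑ y', Tv x' y' j * e x' y') / (∑ x'', ∑ z'', e x'' z''))
          * e x z / (∑ z', e x z'))
      = (∑ z, Tv x z j * e x z) / (∑ z, e x z)
        - (∑ x', ∑ y', Tv x' y' j * e x' y') / (∑ x'', ∑ z'', e x'' z'') := by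
    intro x j
    set c := (∑ x', ∑ y', Tv x' y' j * e x' y') / (∑ x'', ∑ z'', e x'' z'') with hc
    rw [← Finset.sum_div]
    have : (∑ z, (Tv x z j - c) * e x z)
        = (∑ z, Tv x z j * e x z) - c * ∑ z, e x z := by
      simp only [sub_mul]
      rw [Finset.sum_sub_distrib, ← Finset.mul_sum]
    rw [this, sub_div, mul_div_assoc, div_self (hS x), mul_one]
  calc
    -∑ j, (∑ x, r₁ x *
        ∑ z, (Tv x z j - ∑ x', ∑ y', Tv x' y' j * (e x' y' / ∑ x'', ∑ z'', e x'' z''))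
            * (e x z / ∑ x'', ∑ z'', e x'' z'') / (∑ z', e x z' / ∑ x'', ∑ z'', e x'' z''))
        * θ' j
      = -∑ j, (∑ x, r₁ x * ((∑ z, Tv x z j * e x z) / (∑ z, e x z)
            - (∑ x', ∑ y', Tv x' y' j * e x' y') / (∑ x'', ∑ z'', e x'' z''))) * θ' j := by
        congr 1
        refine Finset.sum_congr rfl fun j _ => ?_
        congr 1
        refine Finset.sum_congr rfl fun x _ => ?_
        congr 1
        rw [← hinner x j]
        refine Finset.sum_congr rfl fun z _ => ?_
        rw [hEbar j, hdenom x, hratio x z _]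
    _ = -∑ j, ((∑ x, r₁ x * ((∑ z, Tv x z j * e x z) / (∑ z, e x z)))
            - (∑ x', ∑ y', Tv x' y' j * e x' y') / (∑ x'', ∑ z'', e x'' z'')) * θ' j := by
        congr 1
        refine Finset.sum_congr rfl fun j _ => ?_
        congr 1
        simp only [mul_sub]
        rw [Finset.sum_sub_distrib, ← Finset.sum_mul, hr, one_mul]
    _ = -(∑ j, (∑ x, r₁ x * ((∑ z, Tv x z j * e x z) / (∑ z, e x z))) * θ' j)
          + ∑ j, ((∑ x', ∑ y', Tv x' y' j * e x' y') / (∑ x'', ∑ z'', e x'' z'')) * θ' j := by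
        simp only [sub_mul]
        rw [Finset.sum_sub_distrib, neg_sub, sub_eq_neg_add]
    _ = -(∑ x, r₁ x * ((∑ z, e x z * ∑ j, θ' j * Tv x z j) / ∑ z, e x z))
          + (∑ x, ∑ z, e x z * ∑ j, θ' j * Tv x z j) / (∑ x, ∑ z, e x z) := by
        congr 1
        · -- first part via sum_swap_lin over Ω₁
          congr 1
          have h1 : ∀ j, (∑ x, r₁ x * ((∑ z, Tv x z j * e x z) / (∑ z, e x z)))
              = ∑ x, (∑ z, Tv x z j * e x z) * (r₁ x / (∑ z, e x z)) := by
            intro j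
            exact Finset.sum_congr rfl fun x _ => by ring
          simp only [h1]
          rw [sum_swap_lin (fun x => r₁ x / (∑ z, e x z)) (fun x j => ∑ z, Tv x z j * e x z) θ']
          refine Finset.sum_congr rfl fun x _ => ?_
          have h2 : (∑ j, θ' j * ∑ z, Tv x z j * e x z)
              = ∑ z, e x z * ∑ j, θ' j * Tv x z j := by
            simp only [Finset.mul_sum]
            rw [Finset.sum_comm]
            refine Finset.sum_congr rfl fun z _ => ?_
            exact Finset.sum_congr rfl fun j _ => by ring
          rw [h2]
          ring
        · -- second part via sum_swap_lin over the product
          have h3 : ∀ j, ((∑ x', ∑ y', Tv x' y' j * e x' y') / (∑ x'', ∑ z'', e x'' z'')) * θ' j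
              = (∑ x', ∑ y', Tv x' y' j * e x' y') * θ' j / (∑ x'', ∑ z'', e x'' z'') := by
            intro j; ring
          simp only [h3]
          rw [← Finset.sum_div]
          congr 1
          have h4 : ∀ j, (∑ x', ∑ y', Tv x' y' j * e x' y')
              = ∑ p : Ω₁ × Ω₂, Tv p.1 p.2 j * e p.1 p.2 := fun j =>
            (Fintype.sum_prod_type (fun p : Ω₁ × Ω₂ => Tv p.1 p.2 j * e p.1 p.2)).symm
          have h5 : (∑ x, ∑ z, e x z * ∑ j, θ' j * Tv x z j)
              = ∑ p : Ω₁ × Ω₂, e p.1 p.2 * ∑ j, θ' j * Tv p.1 p.2 j :=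
            (Fintype.sum_prod_type (fun p : Ω₁ × Ω₂ => e p.1 p.2 * ∑ j, θ' j * Tv p.1 p.2 j)).symm
          simp only [h4, h5]
          exact sum_swap_lin (fun p : Ω₁ × Ω₂ => e p.1 p.2) (fun p j => Tv p.1 p.2 j) θ'

theorem KL_margin_to_expFamily_marginal_derivative {Ω₁ Ω₂ : Type*}
    [Fintype Ω₁] [Fintype Ω₂] [Nonempty Ω₁] [Nonempty Ω₂] {d : ℕ}
    (p₁ : Ω₁ → ℝ) (hp₁ : ∀ x, 0 < p₁ x) (hp₁s : ∑ x, p₁ x = 1)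
    (p₂ : Ω₂ → ℝ) (hp₂ : ∀ y, 0 < p₂ y) (hp₂s : ∑ y, p₂ y = 1)
    (T : Ω₁ × Ω₂ → Fin d → ℝ)
    (r₁ : Ω₁ → ℝ) (hr₁ : ∀ x, 0 < r₁ x) (hr₁s : ∑ x, r₁ x = 1)
    (θ : ℝ → Fin d → ℝ) (θ' : Fin d → ℝ) (t₀ : ℝ)
    (hθ : ∀ j, HasDerivAt (fun t => θ t j) (θ' j) t₀) :
    HasDerivAt
      (fun t => ∑ x, r₁ x * Real.log (r₁ x / ∑ z, expFamily2 p₁ p₂ T (θ t) x z))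
      (-∑ j, (∑ x, r₁ x *
          ∑ z, (T (x, z) j - ∑ x', ∑ y', T (x', y') j * expFamily2 p₁ p₂ T (θ t₀) x' y')
            * expFamily2 p₁ p₂ T (θ t₀) x z / (∑ z', expFamily2 p₁ p₂ T (θ t₀) x z'))
        * θ' j) t₀ := by
  classical
  have hppos : ∀ (x : Ω₁) (z : Ω₂), 0 < p₁ x * p₂ z := fun x z => mul_pos (hp₁ x) (hp₂ z)
  have hS_pos : ∀ (v : Fin d → ℝ) (x : Ω₁),
      0 < ∑ z, Real.exp (∑ j, v j * T (x, z) j) * (p₁ x * p₂ z) :=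
    fun v x => Finset.sum_pos (fun z _ => mul_pos (Real.exp_pos _) (hppos x z))
      Finset.univ_nonempty
  have hZ_pos : ∀ v : Fin d → ℝ,
      0 < ∑ x, ∑ z, Real.exp (∑ j, v j * T (x, z) j) * (p₁ x * p₂ z) :=
    fun v => Finset.sum_pos (fun x _ => hS_pos v x) Finset.univ_nonempty
  -- marginal of the exponential family
  have hmarg : ∀ (v : Fin d → ℝ) (x : Ω₁),
      (∑ z, expFamily2 p₁ p₂ T v x z)
        = Real.exp (- logPartition2 p₁ p₂ T v) *
            ∑ z, Real.exp (∑ j, v j * T (x, z) j) * (p₁ x * p₂ z) := by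
    intro v x
    rw [Finset.mul_sum]
    refine Finset.sum_congr rfl fun z _ => ?_
    rw [expFamily2, sub_eq_add_neg, Real.exp_add]
    ring
  -- rewrite the KL function
  have hfun : (fun t => ∑ x, r₁ x * Real.log (r₁ x / ∑ z, expFamily2 p₁ p₂ T (θ t) x z))
      = fun t => ((∑ x, r₁ x * Real.log (r₁ x))
          - ∑ x, r₁ x * Real.log (∑ z, Real.exp (∑ j, θ t j * T (x, z) j) * (p₁ x * p₂ z)))
          + Real.log (∑ x, ∑ z, Real.exp (∑ j, θ t j * T (x, z) j) * (p₁ x * p₂ z)) := by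
    funext t
    have h1 : ∀ x : Ω₁, r₁ x * Real.log (r₁ x / ∑ z, expFamily2 p₁ p₂ T (θ t) x z)
        = r₁ x * Real.log (r₁ x)
          - r₁ x * Real.log (∑ z, Real.exp (∑ j, θ t j * T (x, z) j) * (p₁ x * p₂ z))
          + r₁ x * logPartition2 p₁ p₂ T (θ t) := by
      intro x
      rw [hmarg (θ t) x, Real.log_div (ne_of_gt (hr₁ x))
          (ne_of_gt (mul_pos (Real.exp_pos _) (hS_pos (θ t) x))),
        Real.log_mul (ne_of_gt (Real.exp_pos _)) (ne_of_gt (hS_pos (θ t) x)),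
        Real.log_exp]
      ring
    rw [Finset.sum_congr rfl fun x _ => h1 x, Finset.sum_add_distrib,
      Finset.sum_sub_distrib, ← Finset.sum_mul, hr₁s, one_mul, logPartition2]
  -- derivatives of the pieces
  have hIn : ∀ (x : Ω₁) (z : Ω₂),
      HasDerivAt (fun t => ∑ j, θ t j * T (x, z) j) (∑ j, θ' j * T (x, z) j) t₀ :=
    fun x z => HasDerivAt.fun_sum fun j _ => (hθ j).mul_const _
  have hE : ∀ (x : Ω₁) (z : Ω₂),
      HasDerivAt (fun t => Real.exp (∑ j, θ t j * T (x, z) j) * (p₁ x * p₂ z))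
        (Real.exp (∑ j, θ t₀ j * T (x, z) j) * (p₁ x * p₂ z)
          * ∑ j, θ' j * T (x, z) j) t₀ := by
    intro x z
    have h := ((hIn x z).exp).mul_const (p₁ x * p₂ z)
    refine h.congr_deriv (Eq.symm ?_)
    ring
  have hS : ∀ x : Ω₁,
      HasDerivAt (fun t => ∑ z, Real.exp (∑ j, θ t j * T (x, z) j) * (p₁ x * p₂ z))
        (∑ z, Real.exp (∑ j, θ t₀ j * T (x, z) j) * (p₁ x * p₂ z)
          * ∑ j, θ' j * T (x, z) j) t₀ :=
    fun x => HasDerivAt.fun_sum fun z _ => hE x z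
  have hZd : HasDerivAt (fun t => ∑ x, ∑ z, Real.exp (∑ j, θ t j * T (x, z) j) * (p₁ x * p₂ z))
      (∑ x, ∑ z, Real.exp (∑ j, θ t₀ j * T (x, z) j) * (p₁ x * p₂ z)
        * ∑ j, θ' j * T (x, z) j) t₀ :=
    HasDerivAt.fun_sum fun x _ => hS x
  have hψ := hZd.log (ne_of_gt (hZ_pos (θ t₀)))
  have hsum : HasDerivAt
      (fun t => ∑ x, r₁ x * Real.log (∑ z, Real.exp (∑ j, θ t j * T (x, z) j) * (p₁ x * p₂ z)))
      (∑ x, r₁ x * ((∑ z, Real.exp (∑ j, θ t₀ j * T (x, z) j) * (p₁ x * p₂ z)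
          * ∑ j, θ' j * T (x, z) j)
        / ∑ z, Real.exp (∑ j, θ t₀ j * T (x, z) j) * (p₁ x * p₂ z))) t₀ :=
    HasDerivAt.fun_sum fun x _ => ((hS x).log (ne_of_gt (hS_pos (θ t₀) x))).const_mul (r₁ x)
  have hF := (hsum.const_sub (∑ x, r₁ x * Real.log (r₁ x))).add hψ
  rw [hfun]
  refine hF.congr_deriv (Eq.symm ?_)
  -- now the value identity
  have hEF : ∀ (x : Ω₁) (z : Ω₂), expFamily2 p₁ p₂ T (θ t₀) x z
      = Real.exp (∑ j, θ t₀ j * T (x, z) j) * (p₁ x * p₂ z)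
        / ∑ x', ∑ z', Real.exp (∑ j, θ t₀ j * T (x', z') j) * (p₁ x' * p₂ z') := by
    intro x z
    rw [expFamily2, Real.exp_sub, logPartition2, Real.exp_log (hZ_pos (θ t₀))]
    ring
  simp only [hEF]
  have := kl_alg (fun x z => Real.exp (∑ j, θ t₀ j * T (x, z) j) * (p₁ x * p₂ z))
    (fun x z => T (x, z)) r₁ θ' (fun x => ne_of_gt (hS_pos (θ t₀) x))
    (ne_of_gt (hZ_pos (θ t₀))) hr₁s
  convert this using 2
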